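/- Let A be an n×n complex positive semidefinite matrix such that det(Iₙ + A) = 1 + tr(A). Then rank(A) ≤ 1. -/

import Mathlib

open Matrix ComplexOrder

private lemma one_add_sum_le_prod_aux {ι : Type*} (s : Finset ι) (f : ι → ℝ)
    (hf : ∀ i ∈ s, 0 ≤ f i) : 1 + ∑ i ∈ s, f i ≤ ∏ i ∈ s, (1 + f i) := by
  induction s using Finset.cons_induction with
  | empty => simp
  | cons a s ha ih =>
    rw [Finset.sum_cons, Finset.prod_cons]
    have h1 : 0 ≤ f a := hf a (Finset.mem_cons_self a s)
    have h2 : ∀ i ∈ s, 0 ≤ f i := fun i hi => hf i (Finset.mem_cons_of_mem hi)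
    have h3 := ih h2
    have h4 : 0 ≤ ∑ i ∈ s, f i := Finset.sum_nonneg h2
    nlinarith

/-- For an `n × n` complex positive semidefinite matrix `A`, if
`det (I + A) = 1 + tr A`, then `rank A ≤ 1`. -/
theorem rank_le_one_of_det_one_add_eq_one_add_trace (n : ℕ)
    (A : Matrix (Fin n) (Fin n) ℂ) (hA : A.PosSemidef)
    (hdet : (1 + A).det = 1 + A.trace) :
    A.rank ≤ 1 := by
  have hH := hA.isHermitian
  set f := hH.eigenvalues with hf
  set U := (hH.eigenvectorUnitary : Matrix (Fin n) (Fin n) ℂ) with hU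
  have hUU : star U * U = 1 := (Matrix.mem_unitaryGroup_iff').mp hH.eigenvectorUnitary.2
  have hUU' : U * star U = 1 := (Matrix.mem_unitaryGroup_iff).mp hH.eigenvectorUnitary.2
  have hspec : A = U * diagonal (RCLike.ofReal ∘ f) * star U := by
    have h := hH.spectral_theorem
    rwa [Unitary.conjStarAlgAut_apply] at h
  -- trace
  have htrace : A.trace = ∑ i, (f i : ℂ) := by
    calc A.trace = (U * diagonal (RCLike.ofReal ∘ f) * star U).trace := by rw [← hspec]
    _ = ∑ i, (f i : ℂ) := by
        rw [Matrix.trace_mul_comm, ← mul_assoc, hUU, one_mul, trace_diagonal]; rfl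
  -- determinant
  have hdet2 : (1 + A).det = ∏ i, (1 + (f i : ℂ)) := by
    have : (1 : Matrix (Fin n) (Fin n) ℂ) + A
        = U * (1 + diagonal (RCLike.ofReal ∘ f)) * star U := by
      rw [mul_add, add_mul, mul_one, hUU', ← hspec]
    rw [this, det_mul, det_mul, mul_comm U.det, mul_assoc, ← det_mul, hUU', det_one, mul_one]
    rw [← Matrix.diagonal_one, Matrix.diagonal_add, det_diagonal]
    simp [Pi.add_apply]
  have hnn : ∀ i, 0 ≤ f i := hA.eigenvalues_nonneg
  -- real equality
  have hreal : ∏ i, (1 + f i) = 1 + ∑ i, f i := by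
    have : ((∏ i, (1 + f i) : ℝ) : ℂ) = ((1 + ∑ i, f i : ℝ) : ℂ) := by
      push_cast
      rw [← hdet2, hdet, htrace]
    exact_mod_cast this
  -- conclude
  rw [hH.rank_eq_card_non_zero_eigs]
  by_contra hcard
  push_neg at hcard
  obtain ⟨⟨i, hi⟩, ⟨j, hj⟩, hij⟩ := Fintype.one_lt_card_iff.mp hcard
  have hij' : i ≠ j := fun h => hij (by simpa using h)
  have hfi : 0 < f i := lt_of_le_of_ne (hnn i) (Ne.symm hi)
  have hfj : 0 < f j := lt_of_le_of_ne (hnn j) (Ne.symm hj)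
  -- split off i and j
  have hjmem : j ∈ (Finset.univ.erase i) := Finset.mem_erase.mpr ⟨(Ne.symm hij'), Finset.mem_univ j⟩
  have hprod : ∏ k, (1 + f k) = (1 + f i) * ((1 + f j) * ∏ k ∈ (Finset.univ.erase i).erase j, (1 + f k)) := by
    rw [← Finset.mul_prod_erase _ _ (Finset.mem_univ i), ← Finset.mul_prod_erase _ _ hjmem]
  have hsum : ∑ k, f k = f i + (f j + ∑ k ∈ (Finset.univ.erase i).erase j, f k) := by
    rw [← Finset.add_sum_erase _ _ (Finset.mem_univ i), ← Finset.add_sum_erase _ _ hjmem]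
  set s := (Finset.univ.erase i).erase j
  have hrest : 1 + ∑ k ∈ s, f k ≤ ∏ k ∈ s, (1 + f k) :=
    one_add_sum_le_prod_aux s f (fun k _ => hnn k)
  have hrestnn : 0 ≤ ∑ k ∈ s, f k := Finset.sum_nonneg fun k _ => hnn k
  rw [hprod, hsum] at hreal
  have key : (1 + f i) * ((1 + f j) * (1 + ∑ k ∈ s, f k))
      ≤ (1 + f i) * ((1 + f j) * ∏ k ∈ s, (1 + f k)) := by
    apply mul_le_mul_of_nonneg_left _ (by linarith)
    exact mul_le_mul_of_nonneg_left hrest (by linarith)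
  nlinarith [key, hreal, mul_pos hfi hfj, mul_nonneg (mul_pos hfi hfj).le hrestnn,
    mul_nonneg hfi.le hrestnn, mul_nonneg hfj.le hrestnn]
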